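/- For every n ≥ 1 and every x ∈ ℝ, the derivative of the orthonormal polynomial w_n satisfies w_n′(x) = (1/α₀) · Σ_{m=0}^{n−1} [ w_m(x)·w_{n−1}^{[1]}(x) − w_n(x)·w_{m−1}^{[1]}(x) ] · w_m(x), where w_{−1}^{[1]} = 0. -/

import Mathlib

private lemma wronskian_aux (a b : ℕ → ℝ) (x : ℝ) (p q : ℕ → ℝ)
    (hp : ∀ n, a (n+1) * p (n+2) = (x - b (n+1)) * p (n+1) - a n * p n)
    (hq : ∀ n, a (n+1) * q (n+2) = (x - b (n+1)) * q (n+1) - a n * q n) :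
    ∀ n, a n * (p n * q (n+1) - p (n+1) * q n) = a 0 * (p 0 * q 1 - p 1 * q 0) := by
  intro n
  induction n with
  | zero => rfl
  | succ n ih => linear_combination ih + p (n+1) * hq n - q (n+1) * hp n

private lemma srec_aux (a b : ℕ → ℝ) (x : ℝ) (p q : ℕ → ℝ)
    (hp : ∀ n, a (n+1) * p (n+2) = (x - b (n+1)) * p (n+1) - a n * p n)
    (hq : ∀ n, a (n+1) * q (n+2) = (x - b (n+1)) * q (n+1) - a n * q n)
    (hw : ∀ n, a n * (p n * q (n+1) - p (n+1) * q n) = a 0) (n : ℕ) :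
    a (n+1) * (∑ m ∈ Finset.range (n+2), (p m * q (n+2) - p (n+2) * q m) * p m)
      = a 0 * p (n+1)
        + (x - b (n+1)) * (∑ m ∈ Finset.range (n+1), (p m * q (n+1) - p (n+1) * q m) * p m)
        - a n * (∑ m ∈ Finset.range n, (p m * q n - p n * q m) * p m) := by
  rw [Finset.mul_sum]
  have key : ∀ m ∈ Finset.range (n+2),
      a (n+1) * ((p m * q (n+2) - p (n+2) * q m) * p m)
        = (x - b (n+1)) * ((p m * q (n+1) - p (n+1) * q m) * p m)
          - a n * ((p m * q n - p n * q m) * p m) := by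
    intro m _
    linear_combination (p m * p m) * hq n - (q m * p m) * hp n
  rw [Finset.sum_congr rfl key, Finset.sum_sub_distrib, ← Finset.mul_sum, ← Finset.mul_sum]
  have e1 : ∑ m ∈ Finset.range (n+2), (p m * q (n+1) - p (n+1) * q m) * p m
      = ∑ m ∈ Finset.range (n+1), (p m * q (n+1) - p (n+1) * q m) * p m := by
    rw [Finset.sum_range_succ]; ring
  have e2 : ∑ m ∈ Finset.range (n+2), (p m * q n - p n * q m) * p m
      = (∑ m ∈ Finset.range n, (p m * q n - p n * q m) * p m)
        + (p (n+1) * q n - p n * q (n+1)) * p (n+1) := by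
    rw [Finset.sum_range_succ, Finset.sum_range_succ]; ring
  rw [e1, e2]
  linear_combination p (n+1) * hw n

theorem stmt2 (N : ℕ) (hN : 1 ≤ N)
    (α β : ℤ → ℝ) (hαpos : ∀ j, 0 < α j)
    (hαper : ∀ j, α (j + N) = α j) (hβper : ∀ j, β (j + N) = β j)
    -- `W k n` is the orthonormal polynomial `w_n^{[k]}` associated with the shifted sequences
    (W : ℕ → ℕ → ℝ → ℝ)
    (hW0 : ∀ (k : ℕ) (x : ℝ), W k 0 x = 1)
    (hW1 : ∀ (k : ℕ) (x : ℝ), W k 1 x = (x - β k) / α k)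
    (hWrec : ∀ k : ℕ, ∀ n : ℕ, 1 ≤ n → ∀ x : ℝ,
      α ((n : ℤ) + k - 1) * W k (n - 1) x + β ((n : ℤ) + k) * W k n x
        + α ((n : ℤ) + k) * W k (n + 1) x = x * W k n x)
    (n : ℕ) (hn : 1 ≤ n) (x : ℝ) :
    deriv (W 0 n) x = (1 / α 0) * ∑ m ∈ Finset.range n,
      (W 0 m x * W 1 (n - 1) x - W 0 n x * (if m = 0 then 0 else W 1 (m - 1) x)) * W 0 m x := by
  have hα : ∀ j : ℤ, α j ≠ 0 := fun j => (hαpos j).ne'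
  -- abbreviations
  set a : ℕ → ℝ := fun j => α j with ha_def
  set bb : ℕ → ℝ := fun j => β j with hb_def
  set q : ℝ → ℕ → ℝ := fun y j => if j = 0 then 0 else W 1 (j-1) y with hq_def
  -- the recurrence for W 0, pointwise in y
  have hrec0 : ∀ (m : ℕ) (y : ℝ),
      a (m+1) * W 0 (m+2) y = (y - bb (m+1)) * W 0 (m+1) y - a m * W 0 m y := by
    intro m y
    have h := hWrec 0 (m+1) (Nat.le_add_left 1 m) y
    simp only [Nat.add_sub_cancel, Nat.cast_zero] at h
    show α ((m:ℤ)+1) * W 0 (m+2) y = (y - β ((m:ℤ)+1)) * W 0 (m+1) y - α (m:ℤ) * W 0 m y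
    push_cast at h
    have e1 : ((m:ℤ) + 1 + 0 - 1) = (m:ℤ) := by ring
    have e2 : ((m:ℤ) + 1 + 0) = (m:ℤ) + 1 := by ring
    rw [e1, e2] at h
    linear_combination h
  -- the recurrence for q, pointwise in y
  have hrecq : ∀ (m : ℕ) (y : ℝ),
      a (m+1) * q y (m+2) = (y - bb (m+1)) * q y (m+1) - a m * q y m := by
    intro m y
    show α ((m+1:ℕ):ℤ) * W 1 (m+1) y
        = (y - β ((m+1:ℕ):ℤ)) * W 1 m y - α ((m:ℕ):ℤ) * (if m = 0 then 0 else W 1 (m-1) y)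
    rcases m with _ | k
    · simp only [if_pos rfl, hW1 1 y, hW0 1 y]
      push_cast
      field_simp [hα 1]
      ring
    · have h := hWrec 1 (k+1) (Nat.le_add_left 1 k) y
      simp only [Nat.add_sub_cancel, Nat.cast_one, if_neg (Nat.succ_ne_zero k)] at h ⊢
      push_cast at h ⊢
      have e1 : ((k:ℤ) + 1 + 1 - 1) = (k:ℤ) + 1 := by ring
      rw [e1] at h
      linear_combination h
  -- the Wronskian identity
  have hw : ∀ (y : ℝ) (m : ℕ),
      a m * (W 0 m y * q y (m+1) - W 0 (m+1) y * q y m) = a 0 := by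
    intro y m
    have h := wronskian_aux a bb y (fun j => W 0 j y) (q y)
      (fun m => hrec0 m y) (fun m => hrecq m y) m
    simpa [hq_def, hW0] using h
  -- the key derivative statement
  have main : ∀ (n : ℕ) (y : ℝ), HasDerivAt (W 0 n)
      ((∑ m ∈ Finset.range n,
        (W 0 m y * q y n - W 0 n y * q y m) * W 0 m y) / α 0) y := by
    refine Nat.twoStepInduction ?_ ?_ ?_
    · intro y
      have h0 : W 0 0 = fun _ : ℝ => (1:ℝ) := funext (hW0 0)
      simp only [Finset.range_zero, Finset.sum_empty, zero_div, h0]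
      exact hasDerivAt_const y 1
    · intro y
      have h1 : W 0 1 = fun z : ℝ => (z - β 0) / α 0 := funext (hW1 0)
      have hd : HasDerivAt (W 0 1) (1 / α 0) y := by
        rw [h1]
        exact ((hasDerivAt_id y).sub_const (β 0)).div_const (α 0)
      have : (∑ m ∈ Finset.range 1,
          (W 0 m y * q y 1 - W 0 1 y * q y m) * W 0 m y) / α 0 = 1 / α 0 := by
        simp [hq_def, hW0]
      rw [this]
      exact hd
    · intro n ih1 ih2 y
      -- function-level recurrence
      have hfun : W 0 (n+2)
          = fun z : ℝ => ((z - bb (n+1)) * W 0 (n+1) z - a n * W 0 n z) / a (n+1) := by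
        funext z
        have h := hrec0 n z
        have han : a (n+1) ≠ 0 := hα _
        rw [eq_div_iff han]
        linear_combination h
      have hd : HasDerivAt
          (fun z : ℝ => ((z - bb (n+1)) * W 0 (n+1) z - a n * W 0 n z) / a (n+1))
          ((1 * W 0 (n+1) y
              + (y - bb (n+1)) * ((∑ m ∈ Finset.range (n+1),
                  (W 0 m y * q y (n+1) - W 0 (n+1) y * q y m) * W 0 m y) / α 0)
            - a n * ((∑ m ∈ Finset.range n,
                  (W 0 m y * q y n - W 0 n y * q y m) * W 0 m y) / α 0)) / a (n+1)) y :=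
        ((((hasDerivAt_id y).sub_const (bb (n+1))).mul (ih2 y)).sub
          ((ih1 y).const_mul (a n))).div_const (a (n+1))
      have hS := srec_aux a bb y (fun j => W 0 j y) (q y)
        (fun m => hrec0 m y) (fun m => hrecq m y) (hw y) n
      have ha0 : a 0 ≠ 0 := hα 0
      have ha1 : a (n+1) ≠ 0 := hα _
      have heq : (∑ m ∈ Finset.range (n+2),
            (W 0 m y * q y (n+2) - W 0 (n+2) y * q y m) * W 0 m y) / α 0
          = (1 * W 0 (n+1) y
              + (y - bb (n+1)) * ((∑ m ∈ Finset.range (n+1),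
                  (W 0 m y * q y (n+1) - W 0 (n+1) y * q y m) * W 0 m y) / α 0)
            - a n * ((∑ m ∈ Finset.range n,
                  (W 0 m y * q y n - W 0 n y * q y m) * W 0 m y) / α 0)) / a (n+1) := by
        have hα0 : α 0 = a 0 := rfl
        rw [hα0]
        generalize (∑ m ∈ Finset.range (n+2),
              (W 0 m y * q y (n+2) - W 0 (n+2) y * q y m) * W 0 m y) = S2 at hS ⊢
        generalize (∑ m ∈ Finset.range (n+1),
              (W 0 m y * q y (n+1) - W 0 (n+1) y * q y m) * W 0 m y) = S1 at hS ⊢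
        generalize (∑ m ∈ Finset.range n,
              (W 0 m y * q y n - W 0 n y * q y m) * W 0 m y) = S0 at hS ⊢
        field_simp
        linear_combination hS
      rw [heq, hfun]
      exact hd
  -- conclude
  obtain ⟨k, rfl⟩ : ∃ k, n = k + 1 := ⟨n - 1, by omega⟩
  have h := (main (k+1) x).deriv
  rw [h]
  have hq1 : q x (k+1) = W 1 k x := by simp [hq_def]
  have hq2 : ∀ m : ℕ, q x m = if m = 0 then 0 else W 1 (m-1) x := fun m => rfl
  simp only [hq1, hq2, Nat.add_sub_cancel]
  ring
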